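/- arXiv:1808.06330 — 5 statements merged into one kernel-verified Lean document; each statement's English description precedes it below -/
import Mathlib

section
/- Suppose r ≥ 1 and let K_2 be any real number with 0 < K_2 < 1/r. Then there exist infinitely many positive integers n such that every multi-base representation of n has Hamming weight at least K_2 · (log n)/(log log n). -/
/-- `B` is a power-product of the bases `b 0, …, b (r-1)`. -/
def IsPowerProduct (r : ℕ) (b : Fin r → ℕ) (B : ℕ) : Prop :=
  ∃ α : Fin r → ℕ, B = ∏ j, b j ^ α j

/-- `d` is a multi-base representation of `n` with bases `b` and digit set `D`. -/
def IsMultiBaseRepr (r : ℕ) (b : Fin r → ℕ) (D : Finset ℕ) (n : ℕ) (d : ℕ →₀ ℕ) : Prop :=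
  (∀ B, d B ∈ D) ∧ (∀ B ∈ d.support, IsPowerProduct r b B) ∧
    n = ∑ B ∈ d.support, d B * B

open Finset in
lemma geom_sum_le_pow (M k : ℕ) : ∑ j ∈ Finset.range (k+1), M^j ≤ (M+1)^k := by
  induction k with
  | zero => simp
  | succ k ih =>
    rw [Finset.sum_range_succ, pow_succ]
    have h1 : M ^ (k+1) = M^k * M := by ring
    have h2 : M^k ≤ (M+1)^k := Nat.pow_le_pow_left (by omega) k
    calc ∑ j ∈ range (k+1), M^j + M^(k+1) ≤ (M+1)^k + (M+1)^k * M := by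
          rw [h1]; exact Nat.add_le_add ih (Nat.mul_le_mul_right M h2)
      _ = (M+1)^k * (M+1) := by ring

open Classical Finset in
lemma powerproduct_count (r : ℕ) (b : Fin r → ℕ) (hb : ∀ j, 1 < b j) (x : ℕ) :
    ((Finset.range (x+1)).filter (fun B => IsPowerProduct r b B)).card
      ≤ (Nat.log 2 x + 1)^r := by
  classical
  set f : ℕ → (Fin r → ℕ) := fun B =>
    if h : IsPowerProduct r b B then h.choose else fun _ => 0 with hf
  have key : ∀ B, (h : IsPowerProduct r b B) → B = ∏ j, b j ^ (f B) j := by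
    intro B h
    have : f B = h.choose := dif_pos h
    rw [this]; exact h.choose_spec
  have hcard : ((Finset.range (x+1)).filter (fun B => IsPowerProduct r b B)).card
      ≤ (Fintype.piFinset (fun _ : Fin r => Finset.range (Nat.log 2 x + 1))).card :=
   Finset.card_le_card_of_injOn f
    (by
      intro B hB
      rw [Finset.mem_coe, Finset.mem_filter, Finset.mem_range] at hB
      obtain ⟨hBx, hpp⟩ := hB
      rw [Finset.mem_coe, Fintype.mem_piFinset]
      intro j
      rw [Finset.mem_range, Nat.lt_succ_iff]
      have hB' := key B hpp
      have h1 : b j ^ (f B) j ≤ B := by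
        conv_rhs => rw [hB']
        exact Finset.single_le_prod' (fun i _ => Nat.one_le_pow _ _ (Nat.zero_lt_of_lt (hb i))) (Finset.mem_univ j)
      have h2 : 2 ^ (f B) j ≤ x := by
        calc 2 ^ (f B) j ≤ b j ^ (f B) j :=
              Nat.pow_le_pow_left (hb j) _
          _ ≤ B := h1
          _ ≤ x := by omega
      exact Nat.le_log_of_pow_le (by norm_num) h2)
    (by
      intro B hB B' hB' hEq
      rw [Finset.mem_coe, Finset.mem_filter] at hB hB'
      rw [key B hB.2, key B' hB'.2, hEq])
  calc _ ≤ (Fintype.piFinset (fun _ : Fin r => Finset.range (Nat.log 2 x + 1))).card := hcard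
    _ = (Nat.log 2 x + 1)^r := by
        rw [Fintype.card_piFinset]
        simp [Finset.card_range]

open Classical Finset in
lemma bad_count (r : ℕ) (b : Fin r → ℕ) (hb : ∀ j, 1 < b j) (D : Finset ℕ)
    (x k : ℕ) (Bad : Finset ℕ)
    (hBad : ∀ n ∈ Bad, n ≤ x ∧ ∃ d : ℕ →₀ ℕ, IsMultiBaseRepr r b D n d ∧ d.support.card ≤ k) :
    Bad.card ≤ ((Nat.log 2 x + 1)^r * D.card + 1)^k := by
  classical
  set P : Finset ℕ := (Finset.range (x+1)).filter (fun B => IsPowerProduct r b B) with hP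
  set T : Finset (Finset (ℕ × ℕ)) := (P ×ˢ D).powerset.filter (fun s => s.card ≤ k) with hT
  set f : ℕ → Finset (ℕ × ℕ) := fun n =>
    if h : ∃ d : ℕ →₀ ℕ, IsMultiBaseRepr r b D n d ∧ d.support.card ≤ k then
      h.choose.support.image (fun B => (B, h.choose B))
    else ∅ with hf
  -- description of f on Bad
  have hfval : ∀ n ∈ Bad, ∃ d : ℕ →₀ ℕ, IsMultiBaseRepr r b D n d ∧ d.support.card ≤ k ∧
      f n = d.support.image (fun B => (B, d B)) := by
    intro n hn
    obtain ⟨-, hex⟩ := hBad n hn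
    refine ⟨hex.choose, hex.choose_spec.1, hex.choose_spec.2, ?_⟩
    simp only [hf]
    rw [dif_pos hex]
  have hsum : ∀ n ∈ Bad, n = ∑ p ∈ f n, p.2 * p.1 := by
    intro n hn
    obtain ⟨d, hd, -, hfn⟩ := hfval n hn
    rw [hfn, Finset.sum_image (by intro a _ a' _ h; exact congrArg Prod.fst h)]
    exact hd.2.2
  have h1 : Bad.card ≤ T.card := by
    apply Finset.card_le_card_of_injOn f
    · intro n hn
      obtain ⟨d, hd, hdk, hfn⟩ := hfval n hn
      rw [hT, Finset.mem_coe, Finset.mem_filter, Finset.mem_powerset]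
      constructor
      · rw [hfn]
        intro p hp
        rw [Finset.mem_image] at hp
        obtain ⟨B, hB, rfl⟩ := hp
        rw [Finset.mem_product]
        constructor
        · rw [hP, Finset.mem_filter, Finset.mem_range, Nat.lt_succ_iff]
          refine ⟨?_, hd.2.1 B hB⟩
          have hdB : 0 < d B := Nat.pos_of_ne_zero (Finsupp.mem_support_iff.mp hB)
          have : d B * B ≤ n := by
            rw [hd.2.2]
            exact Finset.single_le_sum (f := fun B => d B * B) (fun i _ => Nat.zero_le _) hB
          have hBn : B ≤ n := le_trans (Nat.le_mul_of_pos_left B hdB) this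
          exact le_trans hBn (hBad n hn).1
        · exact hd.1 B
      · rw [hfn]
        exact le_trans (Finset.card_image_le) hdk
    · intro n hn m hm hEq
      rw [hsum n hn, hsum m hm, hEq]
  have h2 : T.card ≤ (P.card * D.card + 1)^k := by
    have hTeq : T = (Finset.range (k+1)).biUnion (fun j => (P ×ˢ D).powersetCard j) := by
      ext s
      simp only [hT, Finset.mem_filter, Finset.mem_powerset, Finset.mem_biUnion,
        Finset.mem_range, Finset.mem_powersetCard, Nat.lt_succ_iff]
      constructor
      · rintro ⟨hs, hsk⟩; exact ⟨s.card, hsk, hs, rfl⟩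
      · rintro ⟨j, hj, hs, rfl⟩; exact ⟨hs, hj⟩
    calc T.card ≤ ∑ j ∈ Finset.range (k+1), ((P ×ˢ D).powersetCard j).card := by
          rw [hTeq]; exact Finset.card_biUnion_le
      _ = ∑ j ∈ Finset.range (k+1), (P.card * D.card).choose j := by
          apply Finset.sum_congr rfl
          intro j _
          rw [Finset.card_powersetCard, Finset.card_product]
      _ ≤ ∑ j ∈ Finset.range (k+1), (P.card * D.card)^j :=
          Finset.sum_le_sum (fun j _ => Nat.choose_le_pow _ _)
      _ ≤ (P.card * D.card + 1)^k := geom_sum_le_pow _ _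
  have h3 : P.card ≤ (Nat.log 2 x + 1)^r := powerproduct_count r b hb x
  calc Bad.card ≤ (P.card * D.card + 1)^k := le_trans h1 h2
    _ ≤ ((Nat.log 2 x + 1)^r * D.card + 1)^k :=
        Nat.pow_le_pow_left (by exact Nat.add_le_add_right (Nat.mul_le_mul_right _ h3) 1) k

open Filter Topology in
lemma tendsto_ratio (K₂ C₀ R : ℝ) :
    Filter.Tendsto (fun t : ℝ => K₂ * (R * t + C₀) / (t - Real.log 2))
      Filter.atTop (nhds (K₂ * R)) := by
  have h1 : Tendsto (fun t : ℝ => t - Real.log 2) atTop atTop :=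
    tendsto_atTop_add_const_right _ _ tendsto_id
  have h2 : Tendsto (fun t : ℝ => (K₂ * (R * Real.log 2 + C₀)) / (t - Real.log 2))
      atTop (nhds 0) := Tendsto.div_atTop tendsto_const_nhds h1
  have h3 : Tendsto (fun t : ℝ => K₂ * R + (K₂ * (R * Real.log 2 + C₀)) / (t - Real.log 2))
      atTop (nhds (K₂ * R)) := by
    have := (tendsto_const_nhds (α := ℝ) (x := K₂ * R) (f := atTop)).add h2
    simpa using this
  apply h3.congr'
  filter_upwards [eventually_gt_atTop (Real.log 2)] with t ht
  have hne : t - Real.log 2 ≠ 0 := sub_ne_zero.mpr (ne_of_gt ht)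
  field_simp
  ring


set_option maxHeartbeats 2000000 in
open Filter Topology in
theorem lower_bound_minimal_hamming_weight
    (r : ℕ) (hr : 1 ≤ r) (b : Fin r → ℕ) (hb : ∀ j, 1 < b j)
    (D : Finset ℕ) (hD0 : 0 ∈ D) (hD1 : 1 ∈ D)
    (K₂ : ℝ) (hK₂pos : 0 < K₂) (hK₂lt : K₂ < 1 / r) :
    {n : ℕ | 0 < n ∧ ∀ d : ℕ →₀ ℕ, IsMultiBaseRepr r b D n d →
      K₂ * Real.log n / Real.log (Real.log n) ≤ (d.support.card : ℝ)}.Infinite := by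
  classical
  set S := {n : ℕ | 0 < n ∧ ∀ d : ℕ →₀ ℕ, IsMultiBaseRepr r b D n d →
      K₂ * Real.log n / Real.log (Real.log n) ≤ (d.support.card : ℝ)} with hS
  -- basic constants
  have hr' : (0:ℝ) < (r:ℝ) := by exact_mod_cast hr
  set c : ℝ := K₂ * r with hc
  have hc1 : c < 1 := (lt_div_iff₀ hr').mp hK₂lt
  have hc0 : 0 < c := mul_pos hK₂pos hr'
  set C₀ : ℝ := r * Real.log 3 + Real.log (D.card + 1) with hC₀
  -- the key claim: S is unbounded
  apply Set.infinite_of_not_bddAbove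
  rintro ⟨N, hN⟩
  -- eventual analytic facts
  have hlog : Tendsto (fun x : ℕ => Real.log x) atTop atTop :=
    Real.tendsto_log_atTop.comp tendsto_natCast_atTop_atTop
  have hloglog : Tendsto (fun x : ℕ => Real.log (Real.log x)) atTop atTop :=
    Real.tendsto_log_atTop.comp hlog
  have E1 : ∀ᶠ x : ℕ in atTop,
      K₂ * ((r:ℝ) * Real.log (Real.log x) + C₀) / (Real.log (Real.log x) - Real.log 2)
        ≤ (1+c)/2 := by
    have := (tendsto_ratio K₂ C₀ r).comp hloglog
    exact this.eventually_le_const (by rw [← hc]; linarith)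
  have E2 : ∀ᶠ x : ℕ in atTop, (1+c)/2 ≤ (Real.log x - Real.log 2) / Real.log x := by
    have h2 : Tendsto (fun x : ℕ => Real.log 2 / Real.log x) atTop (nhds 0) :=
      Tendsto.div_atTop tendsto_const_nhds hlog
    have h3 : Tendsto (fun x : ℕ => 1 - Real.log 2 / Real.log x) atTop (nhds 1) := by
      have hone : Tendsto (fun _ : ℕ => (1:ℝ)) atTop (nhds 1) := tendsto_const_nhds
      have := hone.sub h2
      simpa using this
    have h4 : Tendsto (fun x : ℕ => (Real.log x - Real.log 2) / Real.log x)
        atTop (nhds 1) := by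
      apply h3.congr'
      filter_upwards [hlog.eventually (eventually_gt_atTop 0)] with x hx
      field_simp
    exact h4.eventually_const_le (by linarith)
  have E3 : ∀ᶠ x : ℕ in atTop, 1 ≤ Real.log x := hlog.eventually (eventually_ge_atTop 1)
  have E4 : ∀ᶠ x : ℕ in atTop, Real.log 2 < Real.log (Real.log x) :=
    hloglog.eventually (eventually_gt_atTop _)
  obtain ⟨X₀, hX₀⟩ := eventually_atTop.mp (E1.and (E2.and (E3.and E4)))
  set x : ℕ := max X₀ (max (N*N) 25) with hxdef
  obtain ⟨H1, H2, H3, H4⟩ := hX₀ x (le_max_left _ _)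
  have hx25 : 25 ≤ x := le_trans (le_max_right _ _) (le_max_right _ _)
  have hxNN : N*N ≤ x := le_trans (le_max_left _ _) (le_max_right _ _)
  clear_value x
  set L : ℝ := Real.log x with hL
  set ℓ : ℝ := Real.log L with hℓ
  have hL1 : 1 ≤ L := H3
  have hL0 : 0 < L := lt_of_lt_of_le one_pos hL1
  have hℓpos : 0 < ℓ - Real.log 2 := sub_pos.mpr H4
  have hx0 : (0:ℝ) < (x:ℝ) := by exact_mod_cast lt_of_lt_of_le (by norm_num) hx25
  set y : ℕ := Nat.sqrt x with hy
  have hyN : N ≤ y := Nat.le_sqrt.mpr hxNN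
  have hy5 : 5 ≤ y := Nat.le_sqrt.mpr hx25
  have hyx : y ≤ x := Nat.sqrt_le_self x
  have hy1 : (x:ℝ) < ((y:ℝ)+1)^2 := by
    have h1 := Nat.lt_succ_sqrt' x
    have h2 : (x:ℝ) < ((Nat.sqrt x + 1 : ℕ) : ℝ)^2 := by exact_mod_cast h1
    rw [hy]
    push_cast at h2 ⊢
    linarith
  have hy2 : ((y:ℝ))^2 ≤ (x:ℝ) := by
    rw [hy]
    exact_mod_cast Nat.sqrt_le' x
  clear_value y
  set κ : ℝ := K₂ * L / (ℓ - Real.log 2) with hκ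
  have hκ0 : 0 ≤ κ := div_nonneg (mul_nonneg hK₂pos.le hL0.le) hℓpos.le
  set k : ℕ := ⌊κ⌋₊ with hk
  have hkκ : (k:ℝ) ≤ κ := Nat.floor_le hκ0
  have hkle : ∀ m : ℕ, (m:ℝ) ≤ κ → m ≤ k := by
    intro m hm
    rw [hk]
    exact Nat.le_floor hm
  clear_value k
  -- Claim A : uniform bound on the weight requirement on (y, x]
  have claimA : ∀ n ∈ Finset.Ioc y x,
      K₂ * Real.log n / Real.log (Real.log n) ≤ κ := by
    intro n hn
    rw [Finset.mem_Ioc] at hn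
    have hn0 : 0 < n := by omega
    have hnx : (n:ℝ) ≤ (x:ℝ) := by exact_mod_cast hn.2
    have hsq : Real.sqrt x ≤ (n:ℝ) := by
      have h1 : Real.sqrt x ≤ ((y:ℝ) + 1) := by
        have hxle : (x:ℝ) ≤ ((y:ℝ)+1)^2 := le_of_lt hy1
        calc Real.sqrt x ≤ Real.sqrt (((y:ℝ)+1)^2) := Real.sqrt_le_sqrt hxle
          _ = (y:ℝ)+1 := Real.sqrt_sq (by have h0 : (0:ℝ) ≤ (y:ℝ) := Nat.cast_nonneg y; linarith)
      have h2 : ((y:ℝ) + 1) ≤ (n:ℝ) := by exact_mod_cast hn.1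
      linarith
    have hlogn_half : L/2 ≤ Real.log n := by
      have := Real.log_le_log (Real.sqrt_pos.mpr hx0) hsq
      rwa [Real.log_sqrt hx0.le] at this
    have hlogn_pos : 0 < Real.log n := lt_of_lt_of_le (by linarith) hlogn_half
    have hup : Real.log n ≤ L := Real.log_le_log (by exact_mod_cast hn0) hnx
    have hlow : ℓ - Real.log 2 ≤ Real.log (Real.log n) := by
      have h1 : Real.log (L/2) ≤ Real.log (Real.log n) :=
        Real.log_le_log (by linarith) hlogn_half
      rwa [Real.log_div (ne_of_gt hL0) (by norm_num)] at h1
    exact div_le_div₀ (mul_nonneg hK₂pos.le hL0.le)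
      (mul_le_mul_of_nonneg_left hup hK₂pos.le) hℓpos hlow
  -- the set of bad n in (y, x]
  set Bad : Finset ℕ := (Finset.Ioc y x).filter (fun n =>
    ∃ d : ℕ →₀ ℕ, IsMultiBaseRepr r b D n d ∧
      (d.support.card : ℝ) < K₂ * Real.log n / Real.log (Real.log n)) with hBadDef
  set M : ℕ := (Nat.log 2 x + 1)^r * D.card with hM
  have hBadCount : Bad.card ≤ (M + 1)^k := by
    apply bad_count r b hb D x k Bad
    intro n hn
    rw [hBadDef, Finset.mem_filter] at hn
    obtain ⟨hmem, d, hd, hlt⟩ := hn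
    refine ⟨(Finset.mem_Ioc.mp hmem).2, d, hd, ?_⟩
    exact hkle _ (le_of_lt (lt_of_lt_of_le hlt (claimA n hmem)))
  have hMfact : (M:ℝ) = ((Nat.log 2 x + 1 : ℕ) : ℝ)^r * (D.card:ℝ) := by
    rw [hM]; push_cast; ring
  clear_value M
  -- real bound on M+1
  have hM1 : ((M:ℝ) + 1) ≤ (3*L)^r * ((D.card:ℝ) + 1) := by
    have hlog2x : (Nat.log 2 x : ℝ) * Real.log 2 ≤ L := by
      have hp : (2:ℕ)^(Nat.log 2 x) ≤ x := Nat.pow_log_le_self 2 (by omega)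
      have hp' : ((2:ℝ))^(Nat.log 2 x) ≤ (x:ℝ) := by exact_mod_cast hp
      have := Real.log_le_log (pow_pos (by norm_num) _) hp'
      rwa [Real.log_pow] at this
    have hlog2 : (0.6931471803 : ℝ) < Real.log 2 := Real.log_two_gt_d9
    have hge : (0:ℝ) ≤ (Nat.log 2 x : ℝ) := Nat.cast_nonneg _
    have hnl : (Nat.log 2 x : ℝ) ≤ 2*L := by nlinarith
    have h3L : (Nat.log 2 x : ℝ) + 1 ≤ 3*L := by linarith
    have hpow : ((Nat.log 2 x + 1 : ℕ) : ℝ)^r ≤ (3*L)^r := by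
      apply pow_le_pow_left₀ (Nat.cast_nonneg _)
      push_cast
      linarith
    have hpow1 : (1:ℝ) ≤ (3*L)^r := one_le_pow₀ (by linarith)
    have : (M:ℝ) ≤ (3*L)^r * (D.card:ℝ) := by
      rw [hMfact]
      exact mul_le_mul_of_nonneg_right hpow (Nat.cast_nonneg _)
    nlinarith
  -- real bound : (M+1)^k ≤ x/2
  have hMk : (((M+1)^k : ℕ) : ℝ) ≤ (x:ℝ)/2 := by
    have hM1pos : (0:ℝ) < (M:ℝ) + 1 := by have h0 : (0:ℝ) ≤ (M:ℝ) := Nat.cast_nonneg M; linarith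
    have hlogM : Real.log ((M:ℝ)+1) ≤ (r:ℝ) * ℓ + C₀ := by
      have h1 : Real.log ((M:ℝ)+1) ≤ Real.log ((3*L)^r * ((D.card:ℝ)+1)) :=
        Real.log_le_log hM1pos hM1
      have hDpos : (0:ℝ) < (D.card:ℝ) + 1 := by
        have h0 : (0:ℝ) ≤ (D.card:ℝ) := Nat.cast_nonneg _
        linarith
      rw [Real.log_mul (ne_of_gt (pow_pos (by linarith) r)) (ne_of_gt hDpos), Real.log_pow,
        Real.log_mul (by norm_num) (ne_of_gt hL0)] at h1
      rw [hC₀]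
      calc Real.log ((M:ℝ)+1) ≤ (r:ℝ) * (Real.log 3 + Real.log L) + Real.log ((D.card:ℝ)+1) := h1
        _ = (r:ℝ) * ℓ + ((r:ℝ) * Real.log 3 + Real.log ((D.card:ℝ)+1)) := by rw [hℓ]; ring
    have hlogM0 : 0 ≤ Real.log ((M:ℝ)+1) := Real.log_nonneg (by have h0 : (0:ℝ) ≤ (M:ℝ) := Nat.cast_nonneg M; linarith)
    have hprod : (k:ℝ) * Real.log ((M:ℝ)+1) ≤ κ * ((r:ℝ) * ℓ + C₀) :=
      mul_le_mul hkκ hlogM hlogM0 hκ0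
    have hswap : κ * ((r:ℝ) * ℓ + C₀) = L * (K₂ * ((r:ℝ) * ℓ + C₀) / (ℓ - Real.log 2)) := by
      rw [hκ]; field_simp
    have hstep : κ * ((r:ℝ) * ℓ + C₀) ≤ L - Real.log 2 := by
      rw [hswap]
      calc L * (K₂ * ((r:ℝ) * ℓ + C₀) / (ℓ - Real.log 2))
          ≤ L * ((1+c)/2) := mul_le_mul_of_nonneg_left H1 hL0.le
        _ ≤ L * ((L - Real.log 2)/L) := mul_le_mul_of_nonneg_left H2 hL0.le
        _ = L - Real.log 2 := by field_simp
    have hfin : Real.log (((M:ℝ)+1)^k) ≤ Real.log ((x:ℝ)/2) := by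
      rw [Real.log_pow, Real.log_div (ne_of_gt hx0) (by norm_num)]
      calc (k:ℝ) * Real.log ((M:ℝ)+1) ≤ L - Real.log 2 := le_trans hprod hstep
        _ = Real.log x - Real.log 2 := by rw [hL]
    have hpowpos : (0:ℝ) < ((M:ℝ)+1)^k := pow_pos hM1pos k
    have hx2 : (0:ℝ) < (x:ℝ)/2 := by linarith
    have := (Real.log_le_log_iff hpowpos hx2).mp hfin
    calc (((M+1)^k : ℕ) : ℝ) = ((M:ℝ)+1)^k := by push_cast; ring
      _ ≤ (x:ℝ)/2 := this
  -- the interval is bigger than the bad set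
  have hcardIoc : ((Finset.Ioc y x).card : ℝ) = (x:ℝ) - (y:ℝ) := by
    rw [Nat.card_Ioc]
    exact Nat.cast_sub hyx
  have hysmall : (y:ℝ) < (x:ℝ)/2 := by
    have h1 : (y:ℝ) ≤ Real.sqrt x := by
      rw [Real.le_sqrt (Nat.cast_nonneg _) hx0.le]
      exact hy2
    have h5 : (5:ℝ) ≤ Real.sqrt x := by
      rw [Real.le_sqrt (by norm_num) hx0.le]
      norm_num
      exact_mod_cast hx25
    have hss : Real.sqrt x * Real.sqrt x = (x:ℝ) := Real.mul_self_sqrt hx0.le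
    nlinarith
  have hBadlt : Bad.card < (Finset.Ioc y x).card := by
    have h1 : (Bad.card : ℝ) ≤ (x:ℝ)/2 := by
      calc (Bad.card : ℝ) ≤ (((M+1)^k : ℕ) : ℝ) := by exact_mod_cast hBadCount
        _ ≤ (x:ℝ)/2 := hMk
    have h2 : ((Bad.card : ℕ) : ℝ) < ((Finset.Ioc y x).card : ℝ) := by
      rw [hcardIoc]; linarith
    exact_mod_cast h2
  -- find a good n
  obtain ⟨n, hnI, hnB⟩ : ∃ n ∈ Finset.Ioc y x, n ∉ Bad := by
    by_contra hcon
    push_neg at hcon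
    have : Finset.Ioc y x ⊆ Bad := fun n hn => hcon n hn
    exact absurd (Finset.card_le_card this) (not_le.mpr hBadlt)
  have hnS : n ∈ S := by
    rw [hS, Set.mem_setOf_eq]
    have hn' := Finset.mem_Ioc.mp hnI
    constructor
    · omega
    · intro d hd
      rw [hBadDef, Finset.mem_filter] at hnB
      push_neg at hnB
      have := hnB hnI d hd
      linarith
  have : n ≤ N := hN hnS
  have : N < n := by
    have := (Finset.mem_Ioc.mp hnI).1
    omega
  omega
end

section
/- Let p and q be integers greater than 1, set λ = log q / log p, and suppose there are positive real constants C_1 and κ such that for every integer M ≥ 1 and every interval J ⊆ [0,1] of length at least C_1 · M^{−κ}, there exists an integer m with 0 ≤ m < M and the fractional part of λ·m lying in J. Then for every integer n > 1, setting M = ⌈log n / log q⌉, there exist nonnegative integers ℓ and m with m < M such that log n − C_1 (log p) M^{−κ} ≤ ℓ · log p + m · log q ≤ log n. -/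
open MeasureTheory

theorem exists_exponents_close_to_log
    (p q : ℕ) (hp : 1 < p) (hq : 1 < q)
    (C₁ κ : ℝ) (hC₁ : 0 < C₁) (hκ : 0 < κ)
    (hgap : ∀ M : ℕ, 1 ≤ M → ∀ J : Set ℝ, J.OrdConnected → J ⊆ Set.Icc 0 1 →
      C₁ * (M : ℝ) ^ (-κ) ≤ (volume J).toReal →
      ∃ m : ℕ, m < M ∧ Int.fract ((Real.log q / Real.log p) * m) ∈ J) :
    ∀ n : ℕ, 1 < n →
      ∃ ℓ m : ℕ, m < ⌈Real.log n / Real.log q⌉₊ ∧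
        Real.log n - C₁ * Real.log p * ((⌈Real.log n / Real.log q⌉₊ : ℝ)) ^ (-κ)
          ≤ (ℓ : ℝ) * Real.log p + (m : ℝ) * Real.log q ∧
        (ℓ : ℝ) * Real.log p + (m : ℝ) * Real.log q ≤ Real.log n := by
  intro n hn
  have hp1 : (1:ℝ) < p := by exact_mod_cast hp
  have hq1 : (1:ℝ) < q := by exact_mod_cast hq
  have hn1 : (1:ℝ) < n := by exact_mod_cast hn
  have hlp : 0 < Real.log p := Real.log_pos hp1
  have hlq : 0 < Real.log q := Real.log_pos hq1
  have hln : 0 < Real.log n := Real.log_pos hn1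
  set M := ⌈Real.log n / Real.log q⌉₊ with hMdef
  have hM1 : 1 ≤ M := Nat.one_le_ceil_iff.mpr (div_pos hln hlq)
  have hMpos : (0:ℝ) < M := by exact_mod_cast hM1
  set δ := C₁ * (M:ℝ) ^ (-κ) with hδdef
  have hδ0 : 0 < δ := mul_pos hC₁ (Real.rpow_pos_of_pos hMpos _)
  set lam := Real.log q / Real.log p with hlamdef
  set x := Real.log n / Real.log p with hxdef
  have hxeq : x * Real.log p = Real.log n := div_mul_cancel₀ _ hlp.ne'
  have hlameq : lam * Real.log p = Real.log q := div_mul_cancel₀ _ hlp.ne'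
  have key : ∃ m : ℕ, m < M ∧ Int.fract (x - lam * m) ≤ δ := by
    by_cases hcase : Int.fract x < δ
    · exact ⟨0, hM1, by simpa using hcase.le⟩
    · push_neg at hcase
      set f := Int.fract x with hfdef
      have hf0 : 0 ≤ f := Int.fract_nonneg x
      have hf1 : f < 1 := Int.fract_lt_one x
      obtain ⟨m, hm, hy⟩ := hgap M hM1 (Set.Icc (f - δ) f) Set.ordConnected_Icc
        (Set.Icc_subset_Icc (by linarith) hf1.le)
        (by rw [Real.volume_Icc, ENNReal.toReal_ofReal (by linarith)]; linarith)
      refine ⟨m, hm, ?_⟩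
      have hy1 := hy.1
      have hy2 := hy.2
      have hfr : Int.fract (x - lam * m) = f - Int.fract (lam * m) := by
        have h1 : x - lam * m
            = (f - Int.fract (lam * (m:ℝ))) + ((⌊x⌋ - ⌊lam * (m:ℝ)⌋ : ℤ) : ℝ) := by
          simp only [hfdef, Int.fract]
          push_cast
          ring
        rw [h1, Int.fract_add_intCast]
        exact Int.fract_eq_self.mpr ⟨by linarith, by linarith⟩
      linarith
  obtain ⟨m, hmM, hfr⟩ := key
  have hmlt : (m:ℝ) < Real.log n / Real.log q := Nat.lt_ceil.mp hmM
  have hpos : 0 ≤ x - lam * m := by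
    have h2 : (m:ℝ) * Real.log q < Real.log n := (lt_div_iff₀ hlq).mp hmlt
    have h5 : x - lam * m = (Real.log n - m * Real.log q) / Real.log p := by
      rw [hxdef, hlamdef]; field_simp
    rw [h5]
    exact div_nonneg (by linarith) hlp.le
  set ℓ := (⌊x - lam * m⌋).toNat with hℓdef
  have hℓeq : (ℓ : ℝ) = (⌊x - lam * m⌋ : ℝ) := by
    rw [hℓdef]
    exact_mod_cast Int.toNat_of_nonneg (Int.floor_nonneg.mpr hpos)
  have hfloor : Int.fract (x - lam * m) = x - lam * m - ℓ := by
    rw [hℓeq, Int.fract]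
  have hfr0 : 0 ≤ Int.fract (x - lam * m) := Int.fract_nonneg _
  refine ⟨ℓ, m, hmM, ?_, ?_⟩
  · have h3 : (x - lam * m - ℓ) * Real.log p ≤ δ * Real.log p := by
      rw [← hfloor]; exact mul_le_mul_of_nonneg_right hfr hlp.le
    have h4 : (x - lam * m - ℓ) * Real.log p
        = Real.log n - ((ℓ:ℝ) * Real.log p + m * Real.log q) := by
      rw [sub_mul, sub_mul, hxeq]
      rw [mul_comm lam, mul_assoc, hlameq]
      ring
    rw [h4] at h3
    rw [hδdef] at h3
    linarith [h3]
  · have h3 : 0 ≤ (x - lam * m - ℓ) * Real.log p := by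
      rw [← hfloor]; exact mul_nonneg hfr0 hlp.le
    have h4 : (x - lam * m - ℓ) * Real.log p
        = Real.log n - ((ℓ:ℝ) * Real.log p + m * Real.log q) := by
      rw [sub_mul, sub_mul, hxeq]
      rw [mul_comm lam, mul_assoc, hlameq]
      ring
    rw [h4] at h3
    linarith
end

section
/- Let N ≥ 2 be an integer and set T(N) = ∏_{j=1}^{r} (1 + ⌊log N / log b_j⌋). For every integer K with 1 ≤ K ≤ T(N)/2, the number of integers n ∈ {1, 2, …, N} that admit a multi-base representation of Hamming weight at most K is bounded above by Σ_{k=1}^{K} binom(T(N), k) · (|D| − 1)^k, which in turn is at most (|D| · T(N))^K. -/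
/-- `choose n` is monotone below the middle. -/
lemma choose_mono_of_le_half (n : ℕ) : ∀ {m k : ℕ}, k ≤ m → m ≤ n / 2 → n.choose k ≤ n.choose m := by
  intro m
  induction m with
  | zero => intro k hk _; rw [Nat.le_zero.mp hk]
  | succ m ih =>
    intro k hk hm
    rcases Nat.eq_or_lt_of_le hk with h | h
    · rw [h]
    · exact (ih (by omega) (by omega)).trans
        (Nat.choose_le_succ_of_lt_half_left (by omega))

theorem count_small_weight_integers
    (r : ℕ) (hr : 1 ≤ r) (b : Fin r → ℕ) (hb : ∀ j, 1 < b j)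
    (D : Finset ℕ) (hD0 : 0 ∈ D) (hD1 : 1 ∈ D)
    (N : ℕ) (hN : 2 ≤ N)
    (T : ℕ) (hT : T = ∏ j, (1 + ⌊Real.log N / Real.log (b j)⌋₊))
    (K : ℕ) (hK1 : 1 ≤ K) (hK2 : 2 * K ≤ T) :
    {n : ℕ | 1 ≤ n ∧ n ≤ N ∧ ∃ d : ℕ →₀ ℕ,
        IsMultiBaseRepr r b D n d ∧ d.support.card ≤ K}.ncard
      ≤ ∑ k ∈ Finset.Icc 1 K, T.choose k * (D.card - 1) ^ k ∧
    ∑ k ∈ Finset.Icc 1 K, T.choose k * (D.card - 1) ^ k ≤ (D.card * T) ^ K := by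
  classical
  have hD2 : 2 ≤ D.card := by
    have hsub : ({0, 1} : Finset ℕ) ⊆ D := by
      intro x hx
      simp only [Finset.mem_insert, Finset.mem_singleton] at hx
      rcases hx with h | h <;> simp [h, hD0, hD1]
    calc 2 = ({0, 1} : Finset ℕ).card := by decide
      _ ≤ D.card := Finset.card_le_card hsub
  set c := D.card - 1 with hc
  have hc1 : 1 ≤ c := by omega
  constructor
  · -- main counting bound
    set L : Fin r → ℕ := fun j => ⌊Real.log N / Real.log (b j)⌋₊ with hL
    set PB : Finset ℕ := (Fintype.piFinset fun j => Finset.range (1 + L j)).image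
        (fun α => ∏ j, b j ^ α j) with hPB
    have hPBcard : PB.card ≤ T := by
      calc PB.card ≤ (Fintype.piFinset fun j => Finset.range (1 + L j)).card :=
            Finset.card_image_le
        _ = ∏ j, (1 + L j) := by simp [Fintype.card_piFinset]
        _ = T := hT.symm
    have hmemPB : ∀ B, IsPowerProduct r b B → B ≤ N → B ∈ PB := by
      rintro B ⟨α, rfl⟩ hBN
      refine Finset.mem_image.mpr ⟨α, ?_, rfl⟩
      rw [Fintype.mem_piFinset]
      intro j
      rw [Finset.mem_range]
      have hpow : b j ^ α j ≤ N := by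
        refine le_trans ?_ hBN
        exact Finset.single_le_prod'
          (fun i _ => Nat.one_le_pow _ _ (Nat.zero_lt_of_lt (hb i))) (Finset.mem_univ j)
      have hbj : (1 : ℝ) < (b j : ℝ) := by exact_mod_cast hb j
      have hlogb : 0 < Real.log (b j) := Real.log_pos hbj
      have h1 : ((b j : ℝ)) ^ (α j) ≤ (N : ℝ) := by exact_mod_cast hpow
      have h2 : (α j : ℝ) * Real.log (b j) ≤ Real.log N := by
        calc (α j : ℝ) * Real.log (b j) = Real.log ((b j : ℝ) ^ (α j)) :=
              (Real.log_pow _ _).symm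
          _ ≤ Real.log N := Real.log_le_log (by positivity) h1
      have h3 : (α j : ℝ) ≤ Real.log N / Real.log (b j) :=
        (le_div_iff₀ hlogb).mpr h2
      have h4 : α j ≤ L j := Nat.le_floor h3
      omega
    set X : Finset (Σ s : Finset ℕ, ∀ a ∈ s, ℕ) :=
      (PB.powerset.filter fun s => 1 ≤ s.card ∧ s.card ≤ K).sigma
        (fun s => s.pi fun _ => D.erase 0) with hX
    set P : ℕ → Prop := fun n =>
      ∃ d : ℕ →₀ ℕ, IsMultiBaseRepr r b D n d ∧ d.support.card ≤ K with hP
    set F : ℕ → (Σ s : Finset ℕ, ∀ a ∈ s, ℕ) := fun n =>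
      if h : P n then ⟨h.choose.support, fun B _ => h.choose B⟩
      else ⟨∅, fun _ h => absurd h (Finset.notMem_empty _)⟩ with hF
    have key : ∀ n, 1 ≤ n → n ≤ N → ∀ h : P n,
        (h.choose.support ∈ PB.powerset.filter fun s => 1 ≤ s.card ∧ s.card ≤ K) ∧
        (∀ B ∈ h.choose.support, h.choose B ∈ D.erase 0) := by
      intro n hn1 hnN h
      obtain ⟨hd1, hd2, hd3⟩ := h.choose_spec.1
      have hcard := h.choose_spec.2
      have hvals : ∀ B ∈ h.choose.support, h.choose B ∈ D.erase 0 := by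
        intro B hB
        rw [Finset.mem_erase]
        exact ⟨Finsupp.mem_support_iff.mp hB, hd1 B⟩
      refine ⟨Finset.mem_filter.mpr ⟨Finset.mem_powerset.mpr ?_, ?_, hcard⟩, hvals⟩
      · intro B hB
        refine hmemPB B (hd2 B hB) ?_
        have h1 : 1 ≤ h.choose B := Nat.one_le_iff_ne_zero.mpr (Finsupp.mem_support_iff.mp hB)
        calc B ≤ h.choose B * B := Nat.le_mul_of_pos_left _ h1
          _ ≤ ∑ B ∈ h.choose.support, h.choose B * B :=
            Finset.single_le_sum (f := fun B => h.choose B * B)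
              (fun _ _ => Nat.zero_le _) hB
          _ = n := hd3.symm
          _ ≤ N := hnN
      · by_contra hemp
        have hempty : h.choose.support = ∅ := by
          rcases Finset.eq_empty_or_nonempty h.choose.support with h' | h'
          · exact h'
          · exact absurd (Finset.card_pos.mpr h') (by omega)
        rw [hd3, hempty] at hn1
        simp at hn1
    have hmaps : ∀ n ∈ {n : ℕ | 1 ≤ n ∧ n ≤ N ∧ P n}, F n ∈ (X : Set _) := by
      rintro n ⟨hn1, hnN, hn⟩
      obtain ⟨hsupp, hvals⟩ := key n hn1 hnN hn
      have : F n ∈ X := by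
        simp only [hF, dif_pos hn, hX]
        rw [Finset.mem_sigma]
        exact ⟨hsupp, Finset.mem_pi.mpr fun a ha => hvals a ha⟩
      exact this
    have hinj : Set.InjOn F {n : ℕ | 1 ≤ n ∧ n ≤ N ∧ P n} := by
      rintro n₁ ⟨-, -, h₁⟩ n₂ ⟨-, -, h₂⟩ heq
      simp only [hF, dif_pos h₁, dif_pos h₂] at heq
      set g : (Σ s : Finset ℕ, ∀ a ∈ s, ℕ) → ℕ → ℕ :=
        fun p B => if h : B ∈ p.1 then p.2 B h else 0 with hg
      have hs : h₁.choose.support = h₂.choose.support := congrArg Sigma.fst heq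
      have hgv := congrArg g heq
      obtain ⟨hd11, hd12, hd13⟩ := h₁.choose_spec.1
      obtain ⟨hd21, hd22, hd23⟩ := h₂.choose_spec.1
      rw [hd13, hd23, ← hs]
      refine Finset.sum_congr rfl fun B hB => ?_
      have hB2 : B ∈ h₂.choose.support := hs ▸ hB
      have hv : h₁.choose B = h₂.choose B := by
        have := congrFun hgv B
        simpa only [hg, dif_pos hB, dif_pos hB2] using this
      rw [hv]
    have hScard : {n : ℕ | 1 ≤ n ∧ n ≤ N ∧ P n}.ncard ≤ X.card := by
      have := Set.ncard_le_ncard_of_injOn F hmaps hinj (X.finite_toSet)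
      simpa using this
    refine hScard.trans ?_
    have hXcard : X.card = ∑ s ∈ PB.powerset.filter (fun s => 1 ≤ s.card ∧ s.card ≤ K),
        c ^ s.card := by
      rw [hX, Finset.card_sigma]
      refine Finset.sum_congr rfl fun s _ => ?_
      rw [Finset.card_pi, Finset.prod_const, Finset.card_erase_of_mem hD0]
    rw [hXcard]
    have hunion : PB.powerset.filter (fun s => 1 ≤ s.card ∧ s.card ≤ K) =
        (Finset.Icc 1 K).biUnion (fun k => Finset.powersetCard k PB) := by
      ext s
      simp only [Finset.mem_filter, Finset.mem_powerset, Finset.mem_biUnion,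
        Finset.mem_Icc, Finset.mem_powersetCard]
      constructor
      · rintro ⟨h1, h2, h3⟩; exact ⟨s.card, ⟨h2, h3⟩, h1, rfl⟩
      · rintro ⟨k, ⟨hk1, hk2⟩, hsub, rfl⟩; exact ⟨hsub, hk1, hk2⟩
    rw [hunion, Finset.sum_biUnion]
    · refine Finset.sum_le_sum fun k _ => ?_
      have hone : ∑ s ∈ Finset.powersetCard k PB, c ^ s.card
          = PB.card.choose k * c ^ k := by
        rw [Finset.sum_congr rfl (fun s hs => by
            rw [(Finset.mem_powersetCard.mp hs).2]),
          Finset.sum_const, Finset.card_powersetCard, smul_eq_mul]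
      rw [hone]
      exact Nat.mul_le_mul_right _ (Nat.choose_le_choose k hPBcard)
    · intro k₁ h₁ k₂ h₂ hne
      simp only [Function.onFun]
      rw [Finset.disjoint_left]
      intro s hs₁ hs₂
      rw [Finset.mem_powersetCard] at hs₁ hs₂
      exact hne (hs₁.2.symm.trans hs₂.2)
  · -- second inequality
    have hmax : ∀ k ∈ Finset.Icc 1 K, T.choose k * c ^ k ≤ T.choose K * c ^ K := by
      intro k hk
      rw [Finset.mem_Icc] at hk
      have hKhalf : K ≤ T / 2 := (Nat.le_div_iff_mul_le (by norm_num)).mpr (by omega)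
      exact Nat.mul_le_mul (choose_mono_of_le_half T hk.2 hKhalf)
        (Nat.pow_le_pow_right hc1 hk.2)
    calc ∑ k ∈ Finset.Icc 1 K, T.choose k * c ^ k
        ≤ ∑ _k ∈ Finset.Icc 1 K, T.choose K * c ^ K := Finset.sum_le_sum hmax
      _ = K * (T.choose K * c ^ K) := by rw [Finset.sum_const, Nat.card_Icc]; simp [mul_comm]
      _ = (K * T.choose K) * c ^ K := by ring
      _ ≤ T ^ K * D.card ^ K := by
          refine Nat.mul_le_mul ?_ (Nat.pow_le_pow_left (by omega) K)
          calc K * T.choose K ≤ K.factorial * T.choose K :=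
                Nat.mul_le_mul_right _ (Nat.self_le_factorial K)
            _ = T.descFactorial K := (Nat.descFactorial_eq_factorial_mul_choose T K).symm
            _ ≤ T ^ K := Nat.descFactorial_le_pow T K
      _ = (D.card * T) ^ K := by rw [← mul_pow, mul_comm]
end

section
/- Let s ≥ 1 be an integer and set T = ∏_{j=1}^{r} (1 + ⌊log(2^s) / log b_j⌋). If K is an integer with 1 ≤ K ≤ T/2 and every integer n ∈ {2^{s−1}+1, 2^{s−1}+2, …, 2^s} admits a multi-base representation of Hamming weight at most K, then (|D| · T)^K ≥ 2^{s−1}. -/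
theorem dyadic_block_weight_bound
    (r : ℕ) (hr : 1 ≤ r) (b : Fin r → ℕ) (hb : ∀ j, 1 < b j)
    (D : Finset ℕ) (hD0 : 0 ∈ D) (hD1 : 1 ∈ D)
    (s : ℕ) (hs : 1 ≤ s)
    (T : ℕ) (hT : T = ∏ j, (1 + ⌊Real.log (2 ^ s) / Real.log (b j)⌋₊))
    (K : ℕ) (hK1 : 1 ≤ K) (hK2 : 2 * K ≤ T)
    (hall : ∀ n : ℕ, 2 ^ (s - 1) < n → n ≤ 2 ^ s →
      ∃ d : ℕ →₀ ℕ, IsMultiBaseRepr r b D n d ∧ d.support.card ≤ K) :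
    2 ^ (s - 1) ≤ (D.card * T) ^ K := by
  classical
  set N : Fin r → ℕ := fun j => ⌊Real.log (2 ^ s) / Real.log (b j)⌋₊ with hN
  have hT' : T = ∏ j, (1 + N j) := hT
  set S : Finset ℕ := (Finset.Icc 1 (2 ^ s)).filter (fun B => IsPowerProduct r b B)
    with hSdef
  have hppos : ∀ B, IsPowerProduct r b B → 1 ≤ B := by
    rintro B ⟨α, rfl⟩
    exact Finset.one_le_prod' fun j _ => Nat.one_le_pow _ _ (Nat.zero_lt_one.trans (hb j))
  have h1S : (1 : ℕ) ∈ S := by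
    rw [hSdef, Finset.mem_filter, Finset.mem_Icc]
    exact ⟨⟨le_refl 1, Nat.one_le_two_pow⟩, ⟨fun _ => 0, by simp⟩⟩
  -- bound on the number of power products up to 2^s
  have hScard : S.card ≤ T := by
    set f : ℕ → (Fin r → ℕ) := fun B =>
      if h : IsPowerProduct r b B then h.choose else 0 with hfdef
    have hf : ∀ B, IsPowerProduct r b B → B = ∏ j, b j ^ (f B j) := by
      intro B h
      simp only [hfdef, dif_pos h]
      exact h.choose_spec
    rw [hT']
    calc S.card ≤ (Fintype.piFinset fun j => Finset.range (1 + N j)).card := by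
          apply Finset.card_le_card_of_injOn f
          · intro B hB
            rw [Finset.mem_coe, hSdef, Finset.mem_filter, Finset.mem_Icc] at hB
            obtain ⟨⟨hB1, hB2⟩, hpp⟩ := hB
            rw [Finset.mem_coe, Fintype.mem_piFinset]
            intro j
            rw [Finset.mem_range]
            have hle : b j ^ f B j ≤ 2 ^ s := by
              calc b j ^ f B j ≤ ∏ i, b i ^ f B i :=
                    Finset.single_le_prod'
                      (fun i _ => Nat.one_le_pow _ _ (Nat.zero_lt_one.trans (hb i)))
                      (Finset.mem_univ j)
                _ = B := (hf B hpp).symm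
                _ ≤ 2 ^ s := hB2
            have hbj : (1 : ℝ) < (b j : ℝ) := by exact_mod_cast hb j
            have hlb : 0 < Real.log (b j) := Real.log_pos hbj
            have hlog : (f B j : ℝ) ≤ Real.log (2 ^ s) / Real.log (b j) := by
              rw [le_div_iff₀ hlb]
              have h1 : ((b j : ℝ)) ^ (f B j) ≤ (2 : ℝ) ^ s := by exact_mod_cast hle
              have h2 := Real.log_le_log (by positivity) h1
              rwa [Real.log_pow] at h2
            have hfl : f B j ≤ N j := Nat.le_floor hlog
            omega
          · intro B hB B' hB' hEq
            rw [Finset.mem_coe, hSdef, Finset.mem_filter] at hB hB'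
            rw [hf B hB.2, hf B' hB'.2, hEq]
      _ = ∏ j, (1 + N j) := by
          rw [Fintype.card_piFinset]
          simp
  -- choose representations
  have hall' : ∀ n : ℕ, ∃ d : ℕ →₀ ℕ, 2 ^ (s - 1) < n → n ≤ 2 ^ s →
      IsMultiBaseRepr r b D n d ∧ d.support.card ≤ K := by
    intro n
    by_cases h : 2 ^ (s - 1) < n ∧ n ≤ 2 ^ s
    · obtain ⟨d, hd⟩ := hall n h.1 h.2
      exact ⟨d, fun _ _ => hd⟩
    · exact ⟨0, fun h1 h2 => absurd ⟨h1, h2⟩ h⟩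
  choose d hd using hall'
  -- the encoding map
  set g : ℕ → Fin K → ℕ × ℕ := fun n i =>
    if h : (i : ℕ) < ((d n).support.sort (· ≤ ·)).length then
      (((d n).support.sort (· ≤ ·)).get ⟨i, h⟩,
        d n (((d n).support.sort (· ≤ ·)).get ⟨i, h⟩))
    else (1, 0) with hg
  have claimA : ∀ n B, d n B ≠ 0 → (d n).support.card ≤ K →
      ∃ i : Fin K, g n i = (B, d n B) := by
    intro n B hB hcard
    have hmem : B ∈ (d n).support.sort (· ≤ ·) := by
      rw [Finset.mem_sort]
      exact Finsupp.mem_support_iff.2 hB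
    obtain ⟨i, hi⟩ := List.mem_iff_get.1 hmem
    have hlen : ((d n).support.sort (· ≤ ·)).length = (d n).support.card :=
      Finset.length_sort _
    have hiK : (i : ℕ) < K := lt_of_lt_of_le (hlen ▸ i.isLt) hcard
    refine ⟨⟨i, hiK⟩, ?_⟩
    simp only [hg]
    rw [dif_pos (show ((⟨(i : ℕ), hiK⟩ : Fin K) : ℕ) <
      ((d n).support.sort (· ≤ ·)).length from i.isLt)]
    rw [List.get_eq_getElem] at hi
    simp [hi]
  have claimB : ∀ n (i : Fin K) B v, g n i = (B, v) → v ≠ 0 → d n B = v := by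
    intro n i B v hgi hv
    simp only [hg] at hgi
    split at hgi
    · rw [Prod.mk.injEq] at hgi
      rw [← hgi.1]
      exact hgi.2
    · rw [Prod.mk.injEq] at hgi
      exact absurd hgi.2.symm hv
  have hcard2 : (Finset.Ioc (2 ^ (s - 1)) (2 ^ s)).card ≤
      (Fintype.piFinset fun _ : Fin K => S ×ˢ D).card := by
    apply Finset.card_le_card_of_injOn g
    · intro n hn
      rw [Finset.mem_coe, Finset.mem_Ioc] at hn
      obtain ⟨hrepr, hcard⟩ := hd n hn.1 hn.2
      rw [Finset.mem_coe, Fintype.mem_piFinset]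
      intro i
      simp only [hg]
      split
      · rename_i h
        set B := ((d n).support.sort (· ≤ ·)).get ⟨i, h⟩ with hBdef
        have hBsupp : B ∈ (d n).support := by
          rw [← Finset.mem_sort (α := ℕ) (· ≤ ·)]
          exact List.get_mem _ _
        have hBD : d n B ∈ D := hrepr.1 B
        have hpp : IsPowerProduct r b B := hrepr.2.1 B hBsupp
        have hB1 : 1 ≤ B := hppos B hpp
        have hdB : 1 ≤ d n B := Nat.pos_of_ne_zero (Finsupp.mem_support_iff.1 hBsupp)
        have hBle : B ≤ 2 ^ s := by
          have h1 : d n B * B ≤ ∑ C ∈ (d n).support, d n C * C :=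
            Finset.single_le_sum (f := fun C => d n C * C) (fun C _ => Nat.zero_le _) hBsupp
          rw [← hrepr.2.2] at h1
          calc B ≤ d n B * B := Nat.le_mul_of_pos_left _ hdB
            _ ≤ n := h1
            _ ≤ 2 ^ s := hn.2
        rw [Finset.mem_product]
        refine ⟨?_, hBD⟩
        rw [hSdef, Finset.mem_filter, Finset.mem_Icc]
        exact ⟨⟨hB1, hBle⟩, hpp⟩
      · rw [Finset.mem_product]
        exact ⟨h1S, hD0⟩
    · intro n hn m hm hEq
      rw [Finset.mem_coe, Finset.mem_Ioc] at hn hm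
      obtain ⟨hreprn, hcardn⟩ := hd n hn.1 hn.2
      obtain ⟨hreprm, hcardm⟩ := hd m hm.1 hm.2
      have hdnm : d n = d m := by
        ext B
        by_cases h1 : d n B = 0
        · by_cases h2 : d m B = 0
          · rw [h1, h2]
          · obtain ⟨i, hi⟩ := claimA m B h2 hcardm
            rw [← hEq] at hi
            exact claimB n i B _ hi h2
        · obtain ⟨i, hi⟩ := claimA n B h1 hcardn
          rw [hEq] at hi
          exact (claimB m i B _ hi h1).symm
      rw [hreprn.2.2, hreprm.2.2, hdnm]
  have hIoc : (Finset.Ioc (2 ^ (s - 1)) (2 ^ s)).card = 2 ^ (s - 1) := by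
    rw [Nat.card_Ioc]
    have h2 : 2 ^ s = 2 * 2 ^ (s - 1) := by
      conv_lhs => rw [show s = (s - 1) + 1 by omega]
      rw [pow_succ']
    omega
  have hpi : (Fintype.piFinset fun _ : Fin K => S ×ˢ D).card = (S.card * D.card) ^ K := by
    rw [Fintype.card_piFinset]
    simp [Finset.card_product]
  calc (2 : ℕ) ^ (s - 1) = (Finset.Ioc (2 ^ (s - 1)) (2 ^ s)).card := hIoc.symm
    _ ≤ _ := hcard2
    _ = (S.card * D.card) ^ K := hpi
    _ ≤ (D.card * T) ^ K := by
        apply Nat.pow_le_pow_left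
        rw [mul_comm]
        exact Nat.mul_le_mul_left _ hScard
end

section
/- Let K_2 be a real number with 0 < K_2 < 1/r. Then for all sufficiently large integers s, there exists an integer n with 2^{s−1} < n ≤ 2^s such that n admits no multi-base representation of Hamming weight less than K_2 · (log n)/(log log n). -/
set_option maxHeartbeats 2000000

open Filter Real

lemma key_eventually (r : ℕ) (K₂ A : ℝ) (hKr : K₂ * r < 1) :
    ∀ᶠ s : ℕ in atTop,
      (K₂ * s * Real.log 2 / (Real.log s - 2) + 1) * (r * Real.log s + (A + r)) <
        ((s : ℝ) - 1) * Real.log 2 := by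
  have hlog2 : (0:ℝ) < Real.log 2 := Real.log_pos one_lt_two
  have hs1 : Tendsto (fun s : ℕ => (s:ℝ) - 1) atTop atTop := by
    simpa [sub_eq_add_neg] using
      tendsto_atTop_add_const_right atTop (-1 : ℝ) tendsto_natCast_atTop_atTop
  have hlogs : Tendsto (fun s : ℕ => Real.log s) atTop atTop :=
    Real.tendsto_log_atTop.comp tendsto_natCast_atTop_atTop
  have hL : Tendsto (fun s : ℕ => Real.log s - 2) atTop atTop := by
    simpa [sub_eq_add_neg] using tendsto_atTop_add_const_right atTop (-2 : ℝ) hlogs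
  have hfrac1 : Tendsto (fun s : ℕ => (s:ℝ)/((s:ℝ)-1)) atTop (nhds 1) := by
    have h := (tendsto_const_nhds (α := ℕ) (x := (1:ℝ))).add hs1.inv_tendsto_atTop
    rw [add_zero] at h
    refine h.congr' ?_
    filter_upwards [eventually_ge_atTop 2] with s hs
    have h2 : (2:ℝ) ≤ (s:ℝ) := by exact_mod_cast hs
    have : (s:ℝ) - 1 ≠ 0 := by nlinarith
    field_simp
    simp only [Pi.inv_apply]
    rw [add_mul, inv_mul_cancel₀ this]; ring
  have hfrac2 : Tendsto (fun s : ℕ => (A+3*r)/(Real.log s - 2)) atTop (nhds 0) :=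
    tendsto_const_nhds.div_atTop hL
  have hll : Tendsto (fun s : ℕ => Real.log s/((s:ℝ)-1)) atTop (nhds 0) := by
    have h0 : Tendsto (fun s : ℕ => Real.log s/(s:ℝ)) atTop (nhds 0) :=
      (Real.isLittleO_log_id_atTop.tendsto_div_nhds_zero).comp tendsto_natCast_atTop_atTop
    have h := h0.mul hfrac1
    rw [zero_mul] at h
    refine h.congr' ?_
    filter_upwards [eventually_ge_atTop 2] with s hs
    have h2 : (2:ℝ) ≤ (s:ℝ) := by exact_mod_cast hs
    have h3 : (s:ℝ) ≠ 0 := by nlinarith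
    have h4 : (s:ℝ) - 1 ≠ 0 := by nlinarith
    field_simp
  have hfrac3 : Tendsto (fun s : ℕ =>
      (r*Real.log s + (A+r))/(((s:ℝ)-1)*Real.log 2)) atTop (nhds 0) := by
    have h1 : Tendsto (fun s : ℕ => (r:ℝ)/Real.log 2 * (Real.log s/((s:ℝ)-1))) atTop (nhds 0) := by
      simpa using tendsto_const_nhds.mul hll
    have h2 : Tendsto (fun s : ℕ => (A+r)/(((s:ℝ)-1)*Real.log 2)) atTop (nhds 0) :=
      tendsto_const_nhds.div_atTop (hs1.atTop_mul_const hlog2)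
    have h := h1.add h2
    rw [add_zero] at h
    refine h.congr' ?_
    filter_upwards [eventually_ge_atTop 2] with s hs
    have h2 : (2:ℝ) ≤ (s:ℝ) := by exact_mod_cast hs
    have h4 : (s:ℝ) - 1 ≠ 0 := by nlinarith
    field_simp
  have hmain : Tendsto (fun s : ℕ =>
      (K₂ * s * Real.log 2 / (Real.log s - 2) + 1) * (r * Real.log s + (A + r)) /
        (((s:ℝ)-1) * Real.log 2)) atTop (nhds (K₂ * r)) := by
    have hg := ((tendsto_const_nhds (x := K₂)).mul hfrac1 |>.mul
      ((tendsto_const_nhds (x := (r:ℝ))).add hfrac2)).add hfrac3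
    rw [add_zero, mul_one, add_zero] at hg
    refine (hg.congr' ?_)
    filter_upwards [eventually_ge_atTop 8] with s hs
    have h8 : (8:ℝ) ≤ (s:ℝ) := by exact_mod_cast hs
    have hlog8 : (2:ℝ) < Real.log s := by
      have : Real.log 8 ≤ Real.log s := Real.log_le_log (by norm_num) (by norm_num [h8])
      have h83 : Real.log 8 = 3 * Real.log 2 := by
        rw [show (8:ℝ) = 2^3 by norm_num, Real.log_pow]; push_cast; ring
      nlinarith [Real.log_two_gt_d9]
    have hℓ : Real.log s - 2 ≠ 0 := by nlinarith
    have hs1' : (s:ℝ) - 1 ≠ 0 := by nlinarith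
    field_simp
    ring
  have hlt : ∀ᶠ s : ℕ in atTop,
      (K₂ * s * Real.log 2 / (Real.log s - 2) + 1) * (r * Real.log s + (A + r)) /
        (((s:ℝ)-1) * Real.log 2) < 1 :=
    hmain.eventually_lt_const hKr
  filter_upwards [hlt, eventually_ge_atTop 2] with s h1 h2
  have h2' : (2:ℝ) ≤ (s:ℝ) := by exact_mod_cast h2
  have hpos : 0 < ((s:ℝ)-1) * Real.log 2 := by nlinarith
  exact (div_lt_one hpos).mp h1

lemma repr_mem (r k s : ℕ) (b : Fin r → ℕ) (hb : ∀ j, 1 < b j) (D : Finset ℕ) (hD0 : 0 ∈ D)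
    (n : ℕ) (hn : n ≤ 2^s) (d : ℕ →₀ ℕ) (hd : IsMultiBaseRepr r b D n d)
    (hcard : d.support.card ≤ k) :
    ∃ t ∈ Fintype.piFinset
        (fun _ : Fin k => D ×ˢ Fintype.piFinset fun _ : Fin r => Finset.range (s+1)),
      (∑ i : Fin k, (t i).1 * ∏ j, b j ^ (t i).2 j) = n := by
  obtain ⟨hdig, hpp, hsum⟩ := hd
  set m := d.support.card with hm
  let e : Fin m ≃o {x // x ∈ d.support} := d.support.orderIsoOfFin rfl
  set B : Fin m → ℕ := fun i => (e i : ℕ) with hB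
  have hBmem : ∀ i, B i ∈ d.support := fun i => (e i).2
  have hBle : ∀ i, B i ≤ 2^s := by
    intro i
    have h1 : d (B i) * B i ≤ n := by
      rw [hsum]
      exact Finset.single_le_sum (f := fun x => d x * x) (fun _ _ => Nat.zero_le _) (hBmem i)
    have hdB : 1 ≤ d (B i) := Nat.one_le_iff_ne_zero.mpr (Finsupp.mem_support_iff.mp (hBmem i))
    calc B i = 1 * B i := (one_mul _).symm
    _ ≤ d (B i) * B i := Nat.mul_le_mul_right _ hdB
    _ ≤ n := h1
    _ ≤ 2^s := hn
  set α : Fin m → Fin r → ℕ := fun i => Classical.choose (hpp (B i) (hBmem i)) with hα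
  have hαspec : ∀ i, B i = ∏ j, b j ^ α i j := fun i => Classical.choose_spec (hpp (B i) (hBmem i))
  have hαle : ∀ i j, α i j ≤ s := by
    intro i j
    have h1 : b j ^ α i j ≤ B i := by
      rw [hαspec i]
      exact Finset.single_le_prod'
        (fun j' _ => Nat.one_le_pow _ _ (Nat.lt_of_lt_of_le Nat.zero_lt_one (hb j').le))
        (Finset.mem_univ j)
    have h2 : 2 ^ α i j ≤ 2 ^ s :=
      le_trans (Nat.pow_le_pow_left (hb j) _) (le_trans h1 (hBle i))
    exact (Nat.pow_le_pow_iff_right Nat.one_lt_two).mp h2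
  set t : Fin k → ℕ × (Fin r → ℕ) :=
    fun i => if h : (i : ℕ) < m then (d (B ⟨i, h⟩), α ⟨i, h⟩) else (0, fun _ => 0) with ht
  refine ⟨t, ?_, ?_⟩
  · rw [Fintype.mem_piFinset]
    intro i
    rw [Finset.mem_product, Fintype.mem_piFinset]
    by_cases h : (i : ℕ) < m
    · simp only [ht, dif_pos h]
      exact ⟨hdig _, fun j => Finset.mem_range.mpr (Nat.lt_succ_of_le (hαle _ j))⟩
    · simp only [ht, dif_neg h]
      exact ⟨hD0, fun j => Finset.mem_range.mpr (Nat.succ_pos s)⟩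
  · set G : ℕ → ℕ := fun i => if h : i < m then d (B ⟨i, h⟩) * B ⟨i, h⟩ else 0 with hG
    have step1 : ∀ i : Fin k, (t i).1 * ∏ j, b j ^ (t i).2 j = G i.1 := by
      intro i
      by_cases h : (i : ℕ) < m
      · simp only [ht, hG, dif_pos h]
        rw [← hαspec ⟨i, h⟩]
      · simp only [ht, hG, dif_neg h, zero_mul]
    calc (∑ i : Fin k, (t i).1 * ∏ j, b j ^ (t i).2 j)
        = ∑ i : Fin k, G i.1 := Finset.sum_congr rfl (fun i _ => step1 i)
      _ = ∑ i ∈ Finset.range k, G i := Fin.sum_univ_eq_sum_range G k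
      _ = ∑ i ∈ Finset.range m, G i := by
          refine (Finset.sum_subset (Finset.range_subset_range.mpr hcard) ?_).symm
          intro x _ hx
          rw [Finset.mem_range, not_lt] at hx
          exact dif_neg (not_lt.mpr hx)
      _ = ∑ i : Fin m, G i.1 := (Fin.sum_univ_eq_sum_range G m).symm
      _ = ∑ i : Fin m, d (B i) * B i := by
          refine Finset.sum_congr rfl (fun i _ => ?_)
          rw [hG]
          simp only [dif_pos i.2, Fin.eta]
      _ = ∑ x ∈ d.support, d x * x := by
          refine Finset.sum_bij (fun i _ => B i) (fun i _ => hBmem i) ?_ ?_ (fun i _ => rfl)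
          · intro i _ i' _ hii
            exact e.injective (Subtype.ext hii)
          · intro y hy
            refine ⟨e.symm ⟨y, hy⟩, Finset.mem_univ _, ?_⟩
            simp only [hB, OrderIso.apply_symm_apply]
      _ = n := hsum.symm

theorem exists_large_weight_in_dyadic_block
    (r : ℕ) (hr : 1 ≤ r) (b : Fin r → ℕ) (hb : ∀ j, 1 < b j)
    (D : Finset ℕ) (hD0 : 0 ∈ D) (hD1 : 1 ∈ D)
    (K₂ : ℝ) (hK₂pos : 0 < K₂) (hK₂lt : K₂ < 1 / r) :
    ∃ s₀ : ℕ, ∀ s : ℕ, s₀ ≤ s →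
      ∃ n : ℕ, 2 ^ (s - 1) < n ∧ n ≤ 2 ^ s ∧
        ∀ d : ℕ →₀ ℕ, IsMultiBaseRepr r b D n d →
          ¬ ((d.support.card : ℝ) < K₂ * Real.log n / Real.log (Real.log n)) := by
  classical
  have hrpos : (0:ℝ) < r := by exact_mod_cast hr
  have hKr : K₂ * r < 1 := by
    have := (lt_div_iff₀ hrpos).mp hK₂lt
    linarith
  have hlog2 : (0:ℝ) < Real.log 2 := Real.log_pos one_lt_two
  obtain ⟨s₀, hs₀⟩ := eventually_atTop.mp
    ((key_eventually r K₂ (Real.log D.card) hKr).and (eventually_ge_atTop 8))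
  refine ⟨s₀, fun s hs => ?_⟩
  obtain ⟨hkey, hs8⟩ := hs₀ s hs
  by_contra hcon
  push_neg at hcon
  have hs8' : (8:ℝ) ≤ (s:ℝ) := by exact_mod_cast hs8
  have hlogsgt : (2:ℝ) < Real.log s := by
    have : Real.log 8 ≤ Real.log s := Real.log_le_log (by norm_num) (by norm_num [hs8'])
    have h83 : Real.log 8 = 3 * Real.log 2 := by
      rw [show (8:ℝ) = 2^3 by norm_num, Real.log_pow]; push_cast; ring
    nlinarith [Real.log_two_gt_d9]
  have hℓpos : (0:ℝ) < Real.log s - 2 := by linarith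
  set c : ℝ := K₂ * s * Real.log 2 / (Real.log s - 2) with hc
  have hcnonneg : 0 ≤ c := by positivity
  set k : ℕ := ⌈c⌉₊ with hk
  set M : ℕ := D.card * (s+1)^r with hM
  set 𝒯 := Fintype.piFinset
      (fun _ : Fin k => D ×ˢ Fintype.piFinset fun _ : Fin r => Finset.range (s+1)) with h𝒯
  set f : (Fin k → ℕ × (Fin r → ℕ)) → ℕ :=
    fun t => ∑ i : Fin k, (t i).1 * ∏ j, b j ^ (t i).2 j with hf
  -- the dyadic block is contained in the image of f
  have hsubset : Finset.Ioc (2^(s-1)) (2^s) ⊆ Finset.image f 𝒯 := by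
    intro n hn
    rw [Finset.mem_Ioc] at hn
    obtain ⟨d, hd, hsmall⟩ := hcon n hn.1 hn.2
    -- log bounds
    have hnpos : 0 < n := lt_of_le_of_lt (Nat.zero_le _) hn.1
    have hn1 : (2:ℝ)^(s-1) < (n:ℝ) := by exact_mod_cast hn.1
    have hn2 : (n:ℝ) ≤ (2:ℝ)^s := by exact_mod_cast hn.2
    have hcast : ((s-1 : ℕ) : ℝ) = (s:ℝ) - 1 := by
      have : 1 ≤ s := by omega
      push_cast [this]; ring
    have hlogn_lb : ((s:ℝ)-1) * Real.log 2 ≤ Real.log n := by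
      have := Real.log_le_log (by positivity) hn1.le
      rwa [Real.log_pow, hcast] at this
    have hlogn_ub : Real.log n ≤ (s:ℝ) * Real.log 2 := by
      have := Real.log_le_log (by exact_mod_cast hnpos) hn2
      rwa [Real.log_pow] at this
    have hlognpos : (0:ℝ) < Real.log n := by nlinarith
    have hloglog : Real.log s - 2 ≤ Real.log (Real.log n) := by
      have h1 : (s:ℝ) * (Real.log 2 / 2) ≤ Real.log n := by nlinarith
      have h2 : (0:ℝ) < (s:ℝ) * (Real.log 2 / 2) := by positivity
      have h3 : Real.log ((s:ℝ) * (Real.log 2 / 2)) ≤ Real.log (Real.log n) :=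
        Real.log_le_log h2 h1
      have h4 : Real.log ((s:ℝ) * (Real.log 2 / 2))
          = Real.log s + Real.log (Real.log 2 / 2) := by
        rw [Real.log_mul (by positivity) (by positivity)]
      have h5 : (-2:ℝ) ≤ Real.log (Real.log 2 / 2) := by
        have hexp : Real.exp (-2) ≤ Real.log 2 / 2 := by
          have h6 : (3:ℝ) ≤ Real.exp 2 := by
            have := Real.add_one_le_exp (2:ℝ)
            linarith
          have h7 : Real.exp (-2) ≤ 1/3 := by
            rw [Real.exp_neg]
            rw [inv_le_comm₀ (by positivity) (by norm_num)]
            simpa using h6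
          nlinarith [Real.log_two_gt_d9]
        calc (-2:ℝ) = Real.log (Real.exp (-2)) := (Real.log_exp _).symm
          _ ≤ Real.log (Real.log 2 / 2) := Real.log_le_log (Real.exp_pos _) hexp
      linarith
    -- weight bound
    have hsmall' : (d.support.card : ℝ) < c := by
      refine lt_of_lt_of_le hsmall ?_
      rw [hc]
      have hnum : K₂ * Real.log n ≤ K₂ * (s:ℝ) * Real.log 2 := by
        rw [mul_assoc]
        exact mul_le_mul_of_nonneg_left hlogn_ub hK₂pos.le
      have hnn : (0:ℝ) ≤ K₂ * (s:ℝ) * Real.log 2 := by positivity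
      exact div_le_div₀ hnn hnum hℓpos hloglog
    have hcardk : d.support.card ≤ k := by
      have : (d.support.card : ℝ) < (k:ℝ) := lt_of_lt_of_le hsmall' (Nat.le_ceil _)
      exact_mod_cast this.le
    obtain ⟨t, ht, hft⟩ := repr_mem r k s b hb D hD0 n hn.2 d hd hcardk
    exact Finset.mem_image.mpr ⟨t, ht, hft⟩
  -- cardinality computations
  have hIoc : (Finset.Ioc (2^(s-1)) (2^s)).card = 2^(s-1) := by
    rw [Nat.card_Ioc]
    have h1 : s - 1 + 1 = s := by omega
    calc 2^s - 2^(s-1) = 2^(s-1+1) - 2^(s-1) := by rw [h1]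
      _ = 2^(s-1) := by rw [pow_succ]; omega
  have hcard𝒯 : 𝒯.card = M^k := by
    rw [h𝒯, Fintype.card_piFinset]
    simp [Finset.card_product, Fintype.card_piFinset, Finset.card_range,
      Finset.prod_const, Finset.card_univ, hM]
  have hDpos : 0 < D.card := Finset.card_pos.mpr ⟨0, hD0⟩
  -- M^k < 2^(s-1)
  have hMk : M^k < 2^(s-1) := by
    have hMcast : ((M:ℕ):ℝ) = (D.card : ℝ) * ((s:ℝ)+1)^r := by
      rw [hM]; push_cast; ring
    have hMpos : (0:ℝ) < (M:ℝ) := by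
      rw [hMcast]; positivity
    have hlogM : Real.log M ≤ (r:ℝ) * Real.log s + (Real.log D.card + r) := by
      rw [hMcast, Real.log_mul (by positivity) (by positivity), Real.log_pow]
      have h1 : Real.log ((s:ℝ)+1) ≤ Real.log s + 1 := by
        have h2 : (s:ℝ)+1 ≤ 2*(s:ℝ) := by linarith
        have h3 : Real.log ((s:ℝ)+1) ≤ Real.log (2*(s:ℝ)) :=
          Real.log_le_log (by positivity) h2
        rw [Real.log_mul (by norm_num) (by positivity)] at h3
        nlinarith [Real.log_two_lt_d9]
      nlinarith [Nat.cast_nonneg (α := ℝ) r]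
    have hstuffnonneg : (0:ℝ) ≤ (r:ℝ) * Real.log s + (Real.log D.card + r) := by
      have h1 : (0:ℝ) ≤ Real.log D.card :=
        Real.log_nonneg (by exact_mod_cast hDpos)
      have h2 : (0:ℝ) ≤ Real.log s := by linarith
      positivity
    have hklt : (k:ℝ) ≤ c + 1 := (Nat.ceil_lt_add_one hcnonneg).le
    have hlogMnonneg : 0 ≤ Real.log (M:ℝ) := by
      apply Real.log_nonneg
      have : 1 ≤ M := by
        rw [hM]
        exact Nat.one_le_iff_ne_zero.mpr (by positivity)
      exact_mod_cast this
    have hchain : (k:ℝ) * Real.log M < ((s:ℝ)-1) * Real.log 2 := by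
      calc (k:ℝ) * Real.log M ≤ (k:ℝ) * ((r:ℝ) * Real.log s + (Real.log D.card + r)) := by
            exact mul_le_mul_of_nonneg_left hlogM (Nat.cast_nonneg k)
        _ ≤ (c + 1) * ((r:ℝ) * Real.log s + (Real.log D.card + r)) :=
            mul_le_mul_of_nonneg_right hklt hstuffnonneg
        _ < ((s:ℝ)-1) * Real.log 2 := hkey
    have hreal : ((M:ℕ):ℝ)^k < ((2:ℕ):ℝ)^(s-1) := by
      have hlhs : Real.log (((M:ℕ):ℝ)^k) = (k:ℝ) * Real.log M := by
        rw [Real.log_pow]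
      have hrhs : Real.log (((2:ℕ):ℝ)^(s-1)) = ((s:ℝ)-1) * Real.log 2 := by
        rw [Real.log_pow]
        have : 1 ≤ s := by omega
        push_cast [this]
        ring
      have hloglt : Real.log (((M:ℕ):ℝ)^k) < Real.log (((2:ℕ):ℝ)^(s-1)) := by
        rw [hlhs, hrhs]; exact hchain
      have hposl : (0:ℝ) < ((M:ℕ):ℝ)^k := by positivity
      exact (Real.log_lt_log_iff hposl (by positivity)).mp hloglt
    have : ((M^k : ℕ):ℝ) < ((2^(s-1) : ℕ):ℝ) := by push_cast; exact_mod_cast hreal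
    exact_mod_cast this
  have h1 : 2^(s-1) ≤ (Finset.image f 𝒯).card := by
    rw [← hIoc]
    exact Finset.card_le_card hsubset
  have h2 : (Finset.image f 𝒯).card ≤ M^k := le_of_le_of_eq Finset.card_image_le hcard𝒯
  omega
end
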